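/- Let A, B, C be unimodular positive-definite Hermitian 2×2 complex matrices satisfying dist(A, B) + dist(B, C) = dist(A, C). Then every nonzero vector v ∈ ℂ² attaining the supremum defining dist(A, C) (i.e. with (1/2)·log((v*Cv)/(v*Av)) = dist(A, C)) also attains the suprema defining dist(A, B) and dist(B, C); that is, (1/2)·log((v*Bv)/(v*Av)) = dist(A, B) and (1/2)·log((v*Cv)/(v*Bv)) = dist(B, C). -/

import Mathlib

open Matrix
open scoped ComplexOrder

/-- The hyperbolic distance between two hermitian inner products on `ℂ²` (represented by
positive-definite matrices inducing the same volume): the maximal logarithmic expansion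
of the `B`-norm relative to the `A`-norm. -/
noncomputable def hdist (A B : Matrix (Fin 2) (Fin 2) ℂ) : ℝ :=
  ⨆ v : {v : Fin 2 → ℂ // v ≠ 0},
    (1 / 2) * Real.log ((star v.1 ⬝ᵥ B.mulVec v.1).re / (star v.1 ⬝ᵥ A.mulVec v.1).re)

section helpers

lemma star_vecMul' (N : Matrix (Fin 2) (Fin 2) ℂ) (x : Fin 2 → ℂ) :
    star x ᵥ* N = star (star N *ᵥ x) := by
  rw [star_eq_conjTranspose, star_mulVec, conjTranspose_conjTranspose]

lemma quad_bounds (M : Matrix (Fin 2) (Fin 2) ℂ) (hM : M.PosDef) :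
    ∃ c d : ℝ, 0 < c ∧ ∀ v : Fin 2 → ℂ,
      c * (star v ⬝ᵥ v).re ≤ (star v ⬝ᵥ M.mulVec v).re ∧
      (star v ⬝ᵥ M.mulVec v).re ≤ d * (star v ⬝ᵥ v).re := by
  have hH := hM.1
  set U : Matrix (Fin 2) (Fin 2) ℂ := (hH.eigenvectorUnitary : Matrix (Fin 2) (Fin 2) ℂ) with hU
  set lam := hH.eigenvalues with hlam
  refine ⟨min (lam 0) (lam 1), max (lam 0) (lam 1),
    lt_min (hM.eigenvalues_pos 0) (hM.eigenvalues_pos 1), fun v => ?_⟩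
  set w : Fin 2 → ℂ := star U *ᵥ v with hw
  have key : star v ⬝ᵥ M.mulVec v = star w ⬝ᵥ (diagonal (Complex.ofReal ∘ lam)).mulVec w := by
    conv_lhs => rw [hH.spectral_theorem, Unitary.conjStarAlgAut_apply]
    rw [← mulVec_mulVec, ← mulVec_mulVec, dotProduct_mulVec, star_vecMul']
    rfl
  have keyn : star v ⬝ᵥ v = star w ⬝ᵥ w := by
    rw [hw, dotProduct_mulVec, star_vecMul', star_star, mulVec_mulVec]
    have h1 : U * star U = 1 := (Matrix.mem_unitaryGroup_iff).mp hH.eigenvectorUnitary.2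
    rw [h1, one_mulVec]
  have hquad : (star w ⬝ᵥ (diagonal (Complex.ofReal ∘ lam)).mulVec w).re
      = lam 0 * Complex.normSq (w 0) + lam 1 * Complex.normSq (w 1) := by
    simp [dotProduct, mulVec_diagonal, Fin.sum_univ_two, Complex.normSq_apply,
      Complex.add_re, Complex.mul_re]
    try ring
  have hnorm : (star w ⬝ᵥ w).re = Complex.normSq (w 0) + Complex.normSq (w 1) := by
    simp [dotProduct, Fin.sum_univ_two, Complex.normSq_apply, Complex.add_re, Complex.mul_re]
    try ring
  rw [key, keyn, hquad, hnorm]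
  have n0 := Complex.normSq_nonneg (w 0)
  have n1 := Complex.normSq_nonneg (w 1)
  constructor
  · nlinarith [min_le_left (lam 0) (lam 1), min_le_right (lam 0) (lam 1)]
  · nlinarith [le_max_left (lam 0) (lam 1), le_max_right (lam 0) (lam 1)]


lemma re_dot_self_pos {v : Fin 2 → ℂ} (hv : v ≠ 0) : 0 < (star v ⬝ᵥ v).re := by
  have h1 : (1 : Matrix (Fin 2) (Fin 2) ℂ).PosDef := Matrix.PosDef.one
  simpa using h1.re_dotProduct_pos hv

lemma hdist_bdd (A B : Matrix (Fin 2) (Fin 2) ℂ) (hA : A.PosDef) (hB : B.PosDef) :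
    BddAbove (Set.range fun v : {v : Fin 2 → ℂ // v ≠ 0} =>
      (1 / 2) * Real.log ((star v.1 ⬝ᵥ B.mulVec v.1).re / (star v.1 ⬝ᵥ A.mulVec v.1).re)) := by
  obtain ⟨cA, dA, hcA, hA'⟩ := quad_bounds A hA
  obtain ⟨cB, dB, hcB, hB'⟩ := quad_bounds B hB
  refine ⟨(1 / 2) * Real.log (dB / cA), ?_⟩
  rintro x ⟨v, rfl⟩
  have hn := re_dot_self_pos v.2
  have hav : 0 < (star v.1 ⬝ᵥ A.mulVec v.1).re := by simpa using hA.re_dotProduct_pos v.2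
  have hbv : 0 < (star v.1 ⬝ᵥ B.mulVec v.1).re := by simpa using hB.re_dotProduct_pos v.2
  have h1 : (star v.1 ⬝ᵥ B.mulVec v.1).re ≤ (dB / cA) * (star v.1 ⬝ᵥ A.mulVec v.1).re := by
    have hu := (hB' v.1).2
    have hl := (hA' v.1).1
    have hdB : 0 < dB := by nlinarith
    rw [div_mul_eq_mul_div, le_div_iff₀ hcA]
    nlinarith [mul_le_mul_of_nonneg_right hu hcA.le, mul_le_mul_of_nonneg_left hl hdB.le]
  have hratio : (star v.1 ⬝ᵥ B.mulVec v.1).re / (star v.1 ⬝ᵥ A.mulVec v.1).re ≤ dB / cA := by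
    rw [div_le_iff₀ hav]; linarith [h1]
  have hpos : 0 < (star v.1 ⬝ᵥ B.mulVec v.1).re / (star v.1 ⬝ᵥ A.mulVec v.1).re :=
    div_pos hbv hav
  have := Real.log_le_log hpos hratio
  linarith

lemma le_hdist (A B : Matrix (Fin 2) (Fin 2) ℂ) (hA : A.PosDef) (hB : B.PosDef)
    (v : Fin 2 → ℂ) (hv : v ≠ 0) :
    (1 / 2) * Real.log ((star v ⬝ᵥ B.mulVec v).re / (star v ⬝ᵥ A.mulVec v).re) ≤ hdist A B :=
  le_ciSup (hdist_bdd A B hA hB) (⟨v, hv⟩ : {v : Fin 2 → ℂ // v ≠ 0})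

end helpers

/-- If unimodular positive-definite Hermitian `2×2` matrices `A, B, C`
satisfy equality in the triangle inequality, `dist(A,B) + dist(B,C) = dist(A,C)`, then any
nonzero vector maximizing the expansion from `A` to `C` also maximizes the expansions from
`A` to `B` and from `B` to `C`. -/
theorem maximizing_line_of_triangle_equality
    (A B C : Matrix (Fin 2) (Fin 2) ℂ)
    (hA : A.PosDef) (hAdet : A.det = 1)
    (hB : B.PosDef) (hBdet : B.det = 1)
    (hC : C.PosDef) (hCdet : C.det = 1)
    (htri : hdist A B + hdist B C = hdist A C) :
    ∀ v : Fin 2 → ℂ, v ≠ 0 →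
      (1 / 2) * Real.log ((star v ⬝ᵥ C.mulVec v).re / (star v ⬝ᵥ A.mulVec v).re)
        = hdist A C →
      ((1 / 2) * Real.log ((star v ⬝ᵥ B.mulVec v).re / (star v ⬝ᵥ A.mulVec v).re)
          = hdist A B ∧
       (1 / 2) * Real.log ((star v ⬝ᵥ C.mulVec v).re / (star v ⬝ᵥ B.mulVec v).re)
          = hdist B C) := by
  intro v hv hmax
  have ha : 0 < (star v ⬝ᵥ A.mulVec v).re := by simpa using hA.re_dotProduct_pos hv
  have hb : 0 < (star v ⬝ᵥ B.mulVec v).re := by simpa using hB.re_dotProduct_pos hv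
  have hc : 0 < (star v ⬝ᵥ C.mulVec v).re := by simpa using hC.re_dotProduct_pos hv
  have hsum :
      (1 / 2) * Real.log ((star v ⬝ᵥ B.mulVec v).re / (star v ⬝ᵥ A.mulVec v).re)
      + (1 / 2) * Real.log ((star v ⬝ᵥ C.mulVec v).re / (star v ⬝ᵥ B.mulVec v).re)
      = (1 / 2) * Real.log ((star v ⬝ᵥ C.mulVec v).re / (star v ⬝ᵥ A.mulVec v).re) := by
    rw [Real.log_div hb.ne' ha.ne', Real.log_div hc.ne' hb.ne', Real.log_div hc.ne' ha.ne']
    ring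
  have h1 := le_hdist A B hA hB v hv
  have h2 := le_hdist B C hB hC v hv
  constructor <;> linarith [hsum, hmax, htri]
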